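/- Let m ≥ 4. The number of codewords of weight 7 in the binary Hamming code of length 2^m−1 equals (2^{m-1}-1)(2^{m-1}-2)(2^{m-1}-3)(2^m-1)(4·2^{2(m-1)} − 30·2^{m-1} + 71)/630. -/

import Mathlib

open Finset

namespace BHW7

def ip {n : ℕ} (x c : Fin n → ZMod 2) : ZMod 2 := ∑ i, x i * c i

def ch : ZMod 2 → ℤ := fun a => if a = 0 then 1 else -1

lemma ch_zero : ch 0 = 1 := rfl

lemma ch_add (a b : ZMod 2) : ch (a + b) = ch a * ch b := by revert a b; decide

lemma ch_natCast (k : ℕ) : ch (k : ZMod 2) = (-1) ^ k := by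
  induction k with
  | zero => rfl
  | succ k ih =>
    have : ((k + 1 : ℕ) : ZMod 2) = (k : ZMod 2) + 1 := by push_cast; ring
    rw [this, ch_add, ih, pow_succ]
    rfl

lemma ip_comm {n : ℕ} (x c : Fin n → ZMod 2) : ip x c = ip c x := by
  simp [ip, mul_comm]

lemma ip_add_left {n : ℕ} (x y c : Fin n → ZMod 2) :
    ip (x + y) c = ip x c + ip y c := by
  simp [ip, add_mul, Finset.sum_add_distrib]

lemma ip_single {n : ℕ} (i : Fin n) (c : Fin n → ZMod 2) :
    ip (Pi.single i 1) c = c i := by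
  rw [ip, Finset.sum_eq_single i]
  · simp
  · intro j _ hj; simp [Pi.single_apply, hj]
  · simp

/-- Character-sum orthogonality over a sum-closed finset. -/
lemma char_sum {n : ℕ} (E : Finset (Fin n → ZMod 2))
    (hE : ∀ a ∈ E, ∀ b ∈ E, a + b ∈ E) (c : Fin n → ZMod 2) :
    ∑ x ∈ E, ch (ip x c) = if ∀ x ∈ E, ip x c = 0 then (E.card : ℤ) else 0 := by
  split_ifs with h
  · rw [Finset.sum_congr rfl (fun x hx => by rw [h x hx, ch_zero])]
    simp
  · push_neg at h
    obtain ⟨x0, hx0E, hx0⟩ := h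
    have hx01 : ip x0 c = 1 := by
      have : ∀ a : ZMod 2, a ≠ 0 → a = 1 := by decide
      exact this _ hx0
    have key : ∑ x ∈ E, ch (ip x c) = ∑ x ∈ E, ch (ip (x + x0) c) := by
      have hxx : x0 + x0 = 0 := by
        ext i; exact CharTwo.add_self_eq_zero _
      apply Finset.sum_nbij' (fun x => x + x0) (fun x => x + x0)
      · intro a ha; exact hE a ha x0 hx0E
      · intro a ha; exact hE a ha x0 hx0E
      · intro a _; rw [add_assoc, hxx, add_zero]
      · intro a _; rw [add_assoc, hxx, add_zero]
      · intro a _; rw [add_assoc, hxx, add_zero]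
    have : ∑ x ∈ E, ch (ip x c) = - ∑ x ∈ E, ch (ip x c) := by
      nth_rewrite 1 [key]
      rw [← Finset.sum_neg_distrib]
      refine Finset.sum_congr rfl fun x _ => ?_
      rw [ip_add_left, ch_add, hx01]
      simp [ch]
    linarith

/-- Vanishing of the full character sum for nonzero `c`. -/
lemma char_sum_univ {n : ℕ} (c : Fin n → ZMod 2) :
    ∑ x : Fin n → ZMod 2, ch (ip x c) = if c = 0 then ((2 ^ n : ℕ) : ℤ) else 0 := by
  rw [char_sum univ (fun _ _ _ _ => mem_univ _) c]
  congr 1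
  · rw [eq_iff_iff]
    constructor
    · intro h
      ext i
      rw [← ip_single i c]
      exact h _ (mem_univ _)
    · intro h x _
      simp [h, ip]
  · rw [card_univ, Fintype.card_fun, ZMod.card, Fintype.card_fin]

/-- Number of `k`-subsets meeting `A` in exactly `j` elements. -/
lemma count_inter {ι : Type*} [Fintype ι] [DecidableEq ι] (A : Finset ι) (k j : ℕ) (hj : j ≤ k) :
    ((univ.powersetCard k).filter (fun s => (s ∩ A).card = j)).card
      = A.card.choose j * Aᶜ.card.choose (k - j) := by
  rw [← Finset.card_powersetCard, ← Finset.card_powersetCard, ← Finset.card_product]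
  apply Finset.card_nbij' (fun s => (s ∩ A, s \ A)) (fun p => p.1 ∪ p.2)
  · intro s hs
    simp only [mem_coe, mem_filter, mem_powersetCard, mem_product] at hs ⊢
    obtain ⟨⟨-, hcard⟩, hint⟩ := hs
    refine ⟨⟨inter_subset_right, hint⟩, ⟨?_, ?_⟩⟩
    · intro i hi
      simp only [mem_sdiff] at hi
      simp [hi.2]
    · have := Finset.card_inter_add_card_sdiff s A
      omega
  · intro p hp
    simp only [mem_coe, mem_product, mem_powersetCard, mem_filter] at hp ⊢
    obtain ⟨⟨ht, htc⟩, hu, huc⟩ := hp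
    have hdisj : Disjoint p.1 p.2 := by
      refine Finset.disjoint_left.mpr fun i hi1 hi2 => ?_
      have := hu hi2
      simp only [mem_compl] at this
      exact this (ht hi1)
    have hU : (p.1 ∪ p.2) ∩ A = p.1 := by
      ext i
      simp only [mem_inter, mem_union]
      constructor
      · rintro ⟨hi | hi, hiA⟩
        · exact hi
        · exact absurd hiA (by simpa using hu hi)
      · intro hi; exact ⟨Or.inl hi, ht hi⟩
    refine ⟨⟨subset_univ _, ?_⟩, ?_⟩
    · rw [card_union_of_disjoint hdisj, htc, huc]; omega
    · rw [hU, htc]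
  · intro s hs
    rw [Finset.ext_iff]
    simp only [mem_union, mem_inter, mem_sdiff]
    intro i; by_cases hi : i ∈ A <;> simp [hi]
  · intro p hp
    simp only [mem_coe, mem_product, mem_powersetCard] at hp
    obtain ⟨⟨ht, -⟩, hu, -⟩ := hp
    have h1 : (p.1 ∪ p.2) ∩ A = p.1 := by
      ext i
      simp only [mem_inter, mem_union]
      constructor
      · rintro ⟨hi | hi, hiA⟩
        · exact hi
        · exact absurd hiA (by simpa using hu hi)
      · intro hi; exact ⟨Or.inl hi, ht hi⟩
    have h2 : (p.1 ∪ p.2) \ A = p.2 := by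
      ext i
      simp only [mem_sdiff, mem_union]
      constructor
      · rintro ⟨hi | hi, hiA⟩
        · exact absurd (ht hi) hiA
        · exact hi
      · intro hi
        exact ⟨Or.inr hi, by simpa using hu hi⟩
    simp [h1, h2]

lemma ip_card {n : ℕ} (x c : Fin n → ZMod 2) :
    ip x c = (((univ.filter (fun i => c i ≠ 0)) ∩ (univ.filter (fun i => x i ≠ 0))).card : ZMod 2) := by
  have hpt : ∀ i : Fin n, x i * c i
      = if i ∈ (univ.filter (fun i => c i ≠ 0)) ∩ (univ.filter (fun i => x i ≠ 0)) then (1 : ZMod 2) else 0 := by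
    intro i
    have : ∀ a b : ZMod 2, a * b = if b ≠ 0 ∧ a ≠ 0 then 1 else 0 := by decide
    simp only [mem_inter, mem_filter, mem_univ, true_and]
    exact this _ _
  rw [ip, Finset.sum_congr rfl (fun i _ => hpt i), Finset.sum_ite_mem, univ_inter,
    Finset.sum_const, nsmul_eq_mul, mul_one]

/-- The Krawtchouk evaluation of the inner character sum. -/
lemma T_eq {n : ℕ} (x : Fin n → ZMod 2) (k : ℕ) :
    ∑ c ∈ univ.filter (fun c : Fin n → ZMod 2 => (univ.filter (fun i => c i ≠ 0)).card = k),
        ch (ip x c)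
      = ∑ j ∈ range (k + 1), (-1 : ℤ) ^ j *
          (((univ.filter (fun i => x i ≠ 0)).card.choose j : ℤ) *
            (((n - (univ.filter (fun i => x i ≠ 0)).card).choose (k - j) : ℕ) : ℤ)) := by
  set A : Finset (Fin n) := univ.filter (fun i => x i ≠ 0) with hA
  have h1 : ∀ c ∈ univ.filter (fun c : Fin n → ZMod 2 => (univ.filter (fun i => c i ≠ 0)).card = k),
      ch (ip x c) = (-1 : ℤ) ^ (((univ.filter (fun i => c i ≠ 0)) ∩ A).card) := by
    intro c _
    rw [ip_card, ch_natCast]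
  rw [Finset.sum_congr rfl h1]
  have h2 : ∑ c ∈ univ.filter (fun c : Fin n → ZMod 2 => (univ.filter (fun i => c i ≠ 0)).card = k),
        (-1 : ℤ) ^ (((univ.filter (fun i => c i ≠ 0)) ∩ A).card)
      = ∑ s ∈ univ.powersetCard k, (-1 : ℤ) ^ ((s ∩ A).card) := by
    apply Finset.sum_nbij' (fun c => univ.filter (fun i => c i ≠ 0))
      (fun s => fun i => if i ∈ s then 1 else 0)
    · intro c hc
      simp only [mem_filter, mem_univ, true_and] at hc
      simp [mem_powersetCard, hc]
    · intro s hs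
      simp only [mem_powersetCard] at hs
      simp only [mem_filter, mem_univ, true_and]
      rw [← hs.2]
      congr 1
      ext i
      simp only [mem_filter, mem_univ, true_and]
      by_cases hi : i ∈ s <;> simp [hi]
    · intro c _
      ext i
      simp only [mem_filter, mem_univ, true_and]
      have h : ∀ a : ZMod 2, (if a ≠ 0 then (1 : ZMod 2) else 0) = a := by decide
      exact h (c i)
    · intro s _
      ext i
      simp only [mem_filter, mem_univ, true_and]
      by_cases hi : i ∈ s <;> simp [hi]
    · intro c _
      rfl
  rw [h2]
  have hmaps : ∀ s ∈ univ.powersetCard k, (s ∩ A).card ∈ range (k + 1) := by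
    intro s hs
    simp only [mem_powersetCard] at hs
    simp only [mem_range]
    exact Nat.lt_succ_of_le (le_trans (card_le_card inter_subset_left) hs.2.le)
  have h3 := Finset.sum_fiberwise_of_maps_to (g := fun s => (s ∩ A).card)
    (f := fun s => (-1 : ℤ) ^ ((s ∩ A).card)) hmaps
  rw [← h3]
  refine Finset.sum_congr rfl fun j hj => ?_
  have hjk : j ≤ k := by simpa using Nat.lt_succ_iff.mp (mem_range.mp hj)
  calc ∑ s ∈ (univ.powersetCard k).filter (fun s => (s ∩ A).card = j), (-1 : ℤ) ^ (s ∩ A).card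
      = ∑ s ∈ (univ.powersetCard k).filter (fun s => (s ∩ A).card = j), (-1 : ℤ) ^ j := by
        refine Finset.sum_congr rfl fun s hs => ?_
        rw [(mem_filter.mp hs).2]
    _ = _ := by
        rw [Finset.sum_const, count_inter A k j hjk, nsmul_eq_mul]
        have hAc : Aᶜ.card = n - A.card := by
          rw [card_compl, Fintype.card_fin]
        rw [hAc]
        push_cast
        ring

lemma choose_q (a k : ℕ) (h : k ≤ a) :
    (a.choose k : ℚ) = (∏ i ∈ range k, ((a : ℚ) - i)) / k.factorial := by
  rw [eq_div_iff (by positivity)]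
  have hd : ((a.descFactorial k : ℕ) : ℚ) = ∏ i ∈ range k, ((a : ℚ) - i) := by
    rw [Nat.descFactorial_eq_prod_range, Nat.cast_prod]
    refine Finset.prod_congr rfl fun i hi => ?_
    have hia : i ≤ a := le_trans (le_of_lt (mem_range.mp hi)) h
    rw [Nat.cast_sub hia]
  rw [← hd, ← Nat.cast_mul, mul_comm, ← Nat.descFactorial_eq_factorial_mul_choose]

lemma key_arith (h : ℕ) (hh : 8 ≤ h) :
    630 * ((((2 * h - 1).choose 7 : ℕ) : ℤ)
        + (2 * (h : ℤ) - 1) *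
          ∑ j ∈ range 8, (-1 : ℤ) ^ j * ((h.choose j : ℤ) * (((h - 1).choose (7 - j) : ℕ) : ℤ)))
      = 2 * (h : ℤ) * (((h : ℤ) - 1) * ((h : ℤ) - 2) * ((h : ℤ) - 3) * (2 * (h : ℤ) - 1) *
          (4 * (h : ℤ) ^ 2 - 30 * (h : ℤ) + 71)) := by
  have hQ : 630 * ((((2 * h - 1).choose 7 : ℕ) : ℚ)
        + (2 * (h : ℚ) - 1) *
          ∑ j ∈ range 8, (-1 : ℚ) ^ j * ((h.choose j : ℚ) * (((h - 1).choose (7 - j) : ℕ) : ℚ)))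
      = 2 * (h : ℚ) * (((h : ℚ) - 1) * ((h : ℚ) - 2) * ((h : ℚ) - 3) * (2 * (h : ℚ) - 1) *
          (4 * (h : ℚ) ^ 2 - 30 * (h : ℚ) + 71)) := by
    have hc1 : ((2 * h - 1 : ℕ) : ℚ) = 2 * (h : ℚ) - 1 := by
      rw [Nat.cast_sub (by omega)]; push_cast; ring
    have hc2 : ((h - 1 : ℕ) : ℚ) = (h : ℚ) - 1 := by
      rw [Nat.cast_sub (by omega)]; push_cast; ring
    have e : ∀ j, j ≤ 7 → (h.choose j : ℚ) = (∏ i ∈ range j, ((h : ℚ) - i)) / j.factorial := by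
      intro j hj; rw [choose_q _ _ (by omega)]
    have e' : ∀ j, j ≤ 7 → ((h - 1).choose j : ℚ)
        = (∏ i ∈ range j, ((h : ℚ) - 1 - i)) / j.factorial := by
      intro j hj
      rw [choose_q _ _ (by omega)]
      congr 1
      refine Finset.prod_congr rfl fun i _ => ?_
      rw [hc2]
    have e7 : ((2 * h - 1).choose 7 : ℚ) = (∏ i ∈ range 7, (2 * (h : ℚ) - 1 - i)) / 5040 := by
      rw [choose_q _ _ (by omega)]
      have h5040 : ((7 : ℕ).factorial : ℚ) = 5040 := by norm_num [Nat.factorial]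
      rw [h5040]
      congr 1
      exact Finset.prod_congr rfl fun i _ => by rw [hc1]
    rw [e7]
    simp only [Finset.sum_range_succ, Finset.sum_range_zero]
    norm_num
    rw [e 2 (by norm_num), e 3 (by norm_num),
      e 4 (by norm_num), e 5 (by norm_num), e 6 (by norm_num), e 7 (by norm_num),
      e' 2 (by norm_num), e' 3 (by norm_num),
      e' 4 (by norm_num), e' 5 (by norm_num), e' 6 (by norm_num), e' 7 (by norm_num), hc2]
    simp only [Finset.prod_range_succ, Finset.prod_range_zero, Nat.factorial]
    push_cast
    field_simp
    ring
  exact_mod_cast hQ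


def K (n w : ℕ) : ℤ :=
  ∑ j ∈ range 8, (-1 : ℤ) ^ j * ((w.choose j : ℤ) * (((n - w).choose (7 - j) : ℕ) : ℤ))

lemma T_eq_K {n : ℕ} (x : Fin n → ZMod 2) :
    ∑ c ∈ univ.filter (fun c : Fin n → ZMod 2 => (univ.filter (fun i => c i ≠ 0)).card = 7),
        ch (ip x c)
      = K n ((univ.filter (fun i => x i ≠ 0)).card) :=
  T_eq x 7

lemma K_zero (n : ℕ) : K n 0 = ((n.choose 7 : ℕ) : ℤ) := by
  simp [K, Finset.sum_range_succ]

end BHW7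

open BHW7

/-- Let m ≥ 4. The number of codewords of weight 7 in the binary Hamming code of
length 2^m-1 (whose dual has weight enumerator 1+(2^m-1)z^(2^(m-1))) equals
(2^(m-1)-1)(2^(m-1)-2)(2^(m-1)-3)(2^m-1)(4·2^(2(m-1)) − 30·2^(m-1) + 71)/630. -/
theorem binary_hamming_weight7_count (m : ℕ) (hm : 4 ≤ m)
    (C : Submodule (ZMod 2) (Fin (2 ^ m - 1) → ZMod 2))
    (hdual : ∀ w : ℕ,
      Nat.card {x : Fin (2 ^ m - 1) → ZMod 2 //
          (∀ c ∈ C, ∑ i, x i * c i = 0) ∧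
          (Finset.univ.filter (fun i => x i ≠ 0)).card = w} =
        if w = 0 then 1 else if w = 2 ^ (m - 1) then 2 ^ m - 1 else 0) :
    630 * Nat.card {c : Fin (2 ^ m - 1) → ZMod 2 // c ∈ C ∧
        (Finset.univ.filter (fun i => c i ≠ 0)).card = 7} =
      (2 ^ (m - 1) - 1) * (2 ^ (m - 1) - 2) * (2 ^ (m - 1) - 3) * (2 ^ m - 1) *
        (4 * 2 ^ (2 * (m - 1)) - 30 * 2 ^ (m - 1) + 71) := by
  classical
  have h2m : (2 : ℕ) ^ m = 2 * 2 ^ (m - 1) := by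
    rw [← pow_succ']
    congr 1
    omega
  have hp8 : 8 ≤ (2 : ℕ) ^ (m - 1) := by
    have : (2 : ℕ) ^ 3 ≤ 2 ^ (m - 1) := Nat.pow_le_pow_right (by norm_num) (by omega)
    simpa using this
  have hsq0 : (2 : ℕ) ^ (2 * (m - 1)) = (2 ^ (m - 1)) * (2 ^ (m - 1)) := by
    rw [two_mul, pow_add]
  obtain ⟨p, hp⟩ : ∃ p, (2 : ℕ) ^ (m - 1) = p := ⟨_, rfl⟩
  rw [hp] at hdual hp8 h2m hsq0 ⊢
  -- pure arithmetic facts, proved in a clean context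
  have hp0 : ¬(0 : ℕ) = p := by omega
  have hpm : p < 2 ^ m - 1 + 1 := by omega
  have htot : 1 + (2 ^ m - 1) = 2 ^ m := by omega
  have hsubp : 2 ^ m - 1 - p = p - 1 := by omega
  have hn2p : 2 ^ m - 1 = 2 * p - 1 := by omega
  have h2p : ((2 ^ m - 1 : ℕ) : ℤ) = 2 * (p : ℤ) - 1 := by omega
  have hc1 : ((p - 1 : ℕ) : ℤ) = (p : ℤ) - 1 := by omega
  have hc2 : ((p - 2 : ℕ) : ℤ) = (p : ℤ) - 2 := by omega
  have hc3 : ((p - 3 : ℕ) : ℤ) = (p : ℤ) - 3 := by omega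
  have hc4 : ((4 * 2 ^ (2 * (m - 1)) - 30 * p + 71 : ℕ) : ℤ)
      = 4 * (p : ℤ) ^ 2 - 30 * (p : ℤ) + 71 := by
    obtain ⟨pp, hpp⟩ : ∃ t, p * p = t := ⟨_, rfl⟩
    have hge : 30 * p ≤ 4 * pp := by rw [← hpp]; nlinarith
    have hstep : ((4 * pp - 30 * p + 71 : ℕ) : ℤ) = 4 * (pp : ℤ) - 30 * (p : ℤ) + 71 := by
      omega
    rw [hsq0, hpp, hstep, ← hpp]
    push_cast
    ring
  -- finsets (as plain variables)
  obtain ⟨DC, hDC⟩ : ∃ s, (univ.filter (fun x : Fin (2 ^ m - 1) → ZMod 2 =>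
      ∀ c ∈ C, ∑ i, x i * c i = 0)) = s := ⟨_, rfl⟩
  obtain ⟨CF, hCF⟩ : ∃ s, (univ.filter (fun c : Fin (2 ^ m - 1) → ZMod 2 => c ∈ C)) = s :=
    ⟨_, rfl⟩
  obtain ⟨EC, hEC⟩ : ∃ s, (univ.filter (fun c : Fin (2 ^ m - 1) → ZMod 2 =>
      ∀ x ∈ DC, ip x c = 0)) = s := ⟨_, rfl⟩
  obtain ⟨W7, hW7⟩ : ∃ s, (univ.filter (fun c : Fin (2 ^ m - 1) → ZMod 2 =>
      (univ.filter (fun i => c i ≠ 0)).card = 7)) = s := ⟨_, rfl⟩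
  obtain ⟨N7, hN7def⟩ : ∃ k, (univ.filter (fun c : Fin (2 ^ m - 1) → ZMod 2 =>
      c ∈ C ∧ (univ.filter (fun i => c i ≠ 0)).card = 7)).card = k := ⟨_, rfl⟩
  have hN7 : Nat.card {c : Fin (2 ^ m - 1) → ZMod 2 // c ∈ C ∧
      (Finset.univ.filter (fun i => c i ≠ 0)).card = 7} = N7 := by
    rw [Nat.card_eq_fintype_card, Fintype.card_subtype, hN7def]
  -- membership lemmas
  have hDCmemdef : ∀ x, x ∈ DC ↔ ∀ c ∈ C, ∑ i, x i * c i = 0 := by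
    intro x; rw [← hDC]; simp
  have hDCmem : ∀ x, x ∈ DC ↔ ∀ c ∈ CF, ip c x = 0 := by
    intro x
    rw [hDCmemdef]
    constructor
    · intro hx c hc
      rw [← hCF] at hc
      simp only [mem_filter, mem_univ, true_and] at hc
      rw [ip_comm]; exact hx c hc
    · intro hx c hc
      have hcCF : c ∈ CF := by rw [← hCF]; simp [hc]
      rw [← show ip x c = ∑ i, x i * c i from rfl, ip_comm]
      exact hx c hcCF
  have hECmem : ∀ c, c ∈ EC ↔ ∀ x ∈ DC, ip x c = 0 := by
    intro c; rw [← hEC]; simp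
  -- closure
  have hCFadd : ∀ a ∈ CF, ∀ b ∈ CF, a + b ∈ CF := by
    intro a ha b hb
    rw [← hCF] at *
    simp only [mem_filter, mem_univ, true_and] at *
    exact C.add_mem ha hb
  have hDCadd : ∀ a ∈ DC, ∀ b ∈ DC, a + b ∈ DC := by
    intro a ha b hb
    rw [hDCmemdef] at *
    intro c hc
    have h1 : ip (a + b) c = ip a c + ip b c := ip_add_left a b c
    have hac : ip a c = 0 := ha c hc
    have hbc : ip b c = 0 := hb c hc
    show ip (a + b) c = 0
    rw [h1, hac, hbc, add_zero]
  have hDC0 : (0 : Fin (2 ^ m - 1) → ZMod 2) ∈ DC := by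
    rw [hDCmemdef]; intro c _; simp
  have hCF0 : (0 : Fin (2 ^ m - 1) → ZMod 2) ∈ CF := by
    rw [← hCF]; simp [C.zero_mem]
  -- |DC| * |CF| = 2 ^ n
  have hA : (DC.card : ℤ) * CF.card = ((2 ^ (2 ^ m - 1) : ℕ) : ℤ) := by
    have lhs : ∑ c ∈ CF, ∑ x : Fin (2 ^ m - 1) → ZMod 2, ch (ip x c)
        = ((2 ^ (2 ^ m - 1) : ℕ) : ℤ) := by
      rw [Finset.sum_congr rfl (fun c _ => char_sum_univ c), Finset.sum_ite_eq' CF 0]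
      simp [hCF0]
    have rhs : ∑ x : Fin (2 ^ m - 1) → ZMod 2, ∑ c ∈ CF, ch (ip x c)
        = (DC.card : ℤ) * CF.card := by
      have inner : ∀ x : Fin (2 ^ m - 1) → ZMod 2, ∑ c ∈ CF, ch (ip x c)
          = if x ∈ DC then (CF.card : ℤ) else 0 := by
        intro x
        rw [Finset.sum_congr rfl (fun c _ => by rw [ip_comm]), char_sum CF hCFadd x]
        congr 1
        rw [eq_iff_iff, hDCmem x]
      rw [Finset.sum_congr rfl (fun x _ => inner x), Finset.sum_ite_mem, univ_inter,
        Finset.sum_const, nsmul_eq_mul]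
    rw [← rhs, ← lhs, Finset.sum_comm]
  -- |DC| * |EC| = 2 ^ n
  have hB : (DC.card : ℤ) * EC.card = ((2 ^ (2 ^ m - 1) : ℕ) : ℤ) := by
    have lhs : ∑ x ∈ DC, ∑ c : Fin (2 ^ m - 1) → ZMod 2, ch (ip x c)
        = ((2 ^ (2 ^ m - 1) : ℕ) : ℤ) := by
      have inner : ∀ x : Fin (2 ^ m - 1) → ZMod 2, ∑ c : Fin (2 ^ m - 1) → ZMod 2, ch (ip x c)
          = if x = 0 then ((2 ^ (2 ^ m - 1) : ℕ) : ℤ) else 0 := by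
        intro x
        rw [Finset.sum_congr rfl (fun c _ => by rw [ip_comm]), char_sum_univ x]
      rw [Finset.sum_congr rfl (fun x _ => inner x), Finset.sum_ite_eq' DC 0]
      simp [hDC0]
    have rhs : ∑ c : Fin (2 ^ m - 1) → ZMod 2, ∑ x ∈ DC, ch (ip x c)
        = (EC.card : ℤ) * DC.card := by
      have inner : ∀ c : Fin (2 ^ m - 1) → ZMod 2, ∑ x ∈ DC, ch (ip x c)
          = if c ∈ EC then (DC.card : ℤ) else 0 := by
        intro c
        rw [char_sum DC hDCadd c]
        congr 1
        rw [eq_iff_iff, hECmem c]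
      rw [Finset.sum_congr rfl (fun c _ => inner c), Finset.sum_ite_mem, univ_inter,
        Finset.sum_const, nsmul_eq_mul]
    rw [mul_comm, ← rhs, ← lhs, Finset.sum_comm]
  -- CF = EC
  have hDCpos : 0 < DC.card := Finset.card_pos.mpr ⟨0, hDC0⟩
  have hCFEC : CF = EC := by
    have hsub : CF ⊆ EC := by
      intro c hc
      rw [hECmem]
      intro x hx
      rw [ip_comm]
      exact (hDCmem x).mp hx c hc
    have hcard : CF.card = EC.card := by
      have heq := hA.trans hB.symm
      have h2 : (CF.card : ℤ) = EC.card :=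
        mul_left_cancel₀ (by exact_mod_cast hDCpos.ne') heq
      exact_mod_cast h2
    exact Finset.eq_of_subset_of_card_le hsub hcard.ge
  -- weight fibers of DC
  have hBw : ∀ w : ℕ, (DC.filter (fun x => (univ.filter (fun i => x i ≠ 0)).card = w)).card
      = if w = 0 then 1 else if w = p then 2 ^ m - 1 else 0 := by
    intro w
    have hd := hdual w
    rw [Nat.card_eq_fintype_card, Fintype.card_subtype] at hd
    rw [← hd]
    congr 1
    rw [← hDC, filter_filter]
  have hwt_mem : ∀ x ∈ DC,
      (univ.filter (fun i => x i ≠ 0)).card ∈ range (2 ^ m - 1 + 1) := by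
    intro x _
    rw [mem_range]
    exact Nat.lt_succ_of_le (le_trans (card_le_card (filter_subset _ _)) (by simp))
  -- |DC| = 2 ^ m
  have hDCcard : DC.card = 2 ^ m := by
    rw [Finset.card_eq_sum_card_fiberwise hwt_mem]
    have hsplit : ∀ w ∈ range (2 ^ m - 1 + 1),
        (DC.filter (fun x => (univ.filter (fun i => x i ≠ 0)).card = w)).card
        = (if w = 0 then 1 else 0) + (if w = p then 2 ^ m - 1 else 0) := by
      intro w _
      rw [hBw w]
      by_cases h0 : w = 0
      · subst h0
        simp [hp0]
      · by_cases hw : w = p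
        · subst hw
          simp [h0]
        · simp [h0, hw]
    rw [Finset.sum_congr rfl hsplit, Finset.sum_add_distrib,
      Finset.sum_ite_eq' (range (2 ^ m - 1 + 1)) 0, Finset.sum_ite_eq' (range (2 ^ m - 1 + 1)) p]
    have h0mem : (0 : ℕ) ∈ range (2 ^ m - 1 + 1) := by simp
    have hpmem : p ∈ range (2 ^ m - 1 + 1) := mem_range.mpr hpm
    rw [if_pos h0mem, if_pos hpmem]
    exact htot
  -- main double count
  have hMAIN : (DC.card : ℤ) * N7
      = K (2 ^ m - 1) 0 + ((2 ^ m - 1 : ℕ) : ℤ) * K (2 ^ m - 1) p := by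
    have lhs : ∑ c ∈ W7, ∑ x ∈ DC, ch (ip x c) = (DC.card : ℤ) * N7 := by
      have inner : ∀ c : Fin (2 ^ m - 1) → ZMod 2, ∑ x ∈ DC, ch (ip x c)
          = if c ∈ EC then (DC.card : ℤ) else 0 := by
        intro c
        rw [char_sum DC hDCadd c]
        congr 1
        rw [eq_iff_iff, hECmem c]
      rw [Finset.sum_congr rfl (fun c _ => inner c), ← Finset.sum_filter,
        Finset.sum_const, nsmul_eq_mul]
      have hfilter : W7.filter (fun c => c ∈ EC)
          = univ.filter (fun c : Fin (2 ^ m - 1) → ZMod 2 =>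
              c ∈ C ∧ (univ.filter (fun i => c i ≠ 0)).card = 7) := by
        rw [← hCFEC, ← hW7, filter_filter]
        apply Finset.filter_congr
        intro c _
        rw [← hCF]
        simp [and_comm]
      rw [hfilter, hN7def, mul_comm]
    have rhs : ∑ x ∈ DC, ∑ c ∈ W7, ch (ip x c)
        = K (2 ^ m - 1) 0 + ((2 ^ m - 1 : ℕ) : ℤ) * K (2 ^ m - 1) p := by
      have step1 : ∑ x ∈ DC, ∑ c ∈ W7, ch (ip x c)
          = ∑ x ∈ DC, K (2 ^ m - 1) ((univ.filter (fun i => x i ≠ 0)).card) := by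
        refine Finset.sum_congr rfl (fun x _ => ?_)
        rw [← hW7]
        exact T_eq_K x
      rw [step1, ← Finset.sum_fiberwise_of_maps_to hwt_mem]
      have step2 : ∀ w ∈ range (2 ^ m - 1 + 1),
          ∑ x ∈ DC.filter (fun x => (univ.filter (fun i => x i ≠ 0)).card = w),
            K (2 ^ m - 1) ((univ.filter (fun i => x i ≠ 0)).card)
          = (if w = 0 then K (2 ^ m - 1) 0 else 0)
            + (if w = p then ((2 ^ m - 1 : ℕ) : ℤ) * K (2 ^ m - 1) p else 0) := by
        intro w _
        have hcongr : ∀ x ∈ DC.filter (fun x => (univ.filter (fun i => x i ≠ 0)).card = w),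
            K (2 ^ m - 1) ((univ.filter (fun i => x i ≠ 0)).card) = K (2 ^ m - 1) w := by
          intro x hx
          rw [(mem_filter.mp hx).2]
        rw [Finset.sum_congr rfl hcongr, Finset.sum_const, hBw w, nsmul_eq_mul]
        by_cases h0 : w = 0
        · subst h0
          simp [hp0]
        · by_cases hw : w = p
          · subst hw
            simp [h0]
          · simp [h0, hw]
      rw [Finset.sum_congr rfl step2, Finset.sum_add_distrib,
        Finset.sum_ite_eq' (range (2 ^ m - 1 + 1)) 0,
        Finset.sum_ite_eq' (range (2 ^ m - 1 + 1)) p]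
      have h0mem : (0 : ℕ) ∈ range (2 ^ m - 1 + 1) := by simp
      have hpmem : p ∈ range (2 ^ m - 1 + 1) := mem_range.mpr hpm
      rw [if_pos h0mem, if_pos hpmem]
    rw [← lhs, ← rhs, Finset.sum_comm]
  -- finish
  rw [hN7]
  have hKp : K (2 ^ m - 1) p = ∑ j ∈ range 8, (-1 : ℤ) ^ j *
      ((p.choose j : ℤ) * (((p - 1).choose (7 - j) : ℕ) : ℤ)) := by
    unfold K
    refine Finset.sum_congr rfl fun j _ => ?_
    rw [hsubp]
  have hchoose : (2 ^ m - 1).choose 7 = (2 * p - 1).choose 7 := by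
    rw [hn2p]
  have hZ : (630 : ℤ) * N7 = ((p - 1) * (p - 2) * (p - 3) *
      (2 ^ m - 1) * (4 * 2 ^ (2 * (m - 1)) - 30 * p + 71) : ℕ) := by
    apply mul_left_cancel₀
      (show (2 * (p : ℤ)) ≠ 0 by positivity)
    calc 2 * (p : ℤ) * (630 * N7)
        = 630 * ((DC.card : ℤ) * N7) := by
          rw [hDCcard, h2m]; push_cast; ring
      _ = 630 * (K (2 ^ m - 1) 0 + ((2 ^ m - 1 : ℕ) : ℤ) * K (2 ^ m - 1) p) := by
          rw [hMAIN]
      _ = 630 * ((((2 * p - 1).choose 7 : ℕ) : ℤ)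
            + (2 * (p : ℤ) - 1) * ∑ j ∈ range 8, (-1 : ℤ) ^ j *
              ((p.choose j : ℤ) * (((p - 1).choose (7 - j) : ℕ) : ℤ))) := by
          rw [K_zero, hKp, hchoose, h2p]
      _ = 2 * (p : ℤ) * (((p : ℤ) - 1) * ((p : ℤ) - 2) * ((p : ℤ) - 3) *
            (2 * (p : ℤ) - 1) * (4 * (p : ℤ) ^ 2 - 30 * (p : ℤ) + 71)) :=
          key_arith p hp8
      _ = 2 * (p : ℤ) * (((p - 1) * (p - 2) * (p - 3) * (2 ^ m - 1) *
            (4 * 2 ^ (2 * (m - 1)) - 30 * p + 71) : ℕ)) := by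
          push_cast [hc1, hc2, hc3, hc4, h2p]
          ring
  exact_mod_cast hZ
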